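/- For every natural number p, the map S ↦ f_S is a bijection from the set of antichain covers of Fin p onto the set of Boolean functions f : (Fin p → Bool) → Bool that are monotone (if s ≤ t pointwise, with false < true, then f s ≤ f t) and nondegenerate. -/

import Mathlib

/-- The Boolean function associated with a family `S` of subsets of `Fin p`:
`fS S s = true` iff there exists `σ ∈ S` with `s k = true` for all `k ∈ σ`. -/
def fS {p : ℕ} (S : Finset (Finset (Fin p))) (s : Fin p → Bool) : Bool :=
  decide (∃ σ ∈ S, ∀ k ∈ σ, s k = true)

/-- `S` is an antichain cover of `Fin p`. -/
def AntichainCover {p : ℕ} (S : Finset (Finset (Fin p))) : Prop :=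
  IsAntichain (· ⊆ ·) (S : Set (Finset (Fin p))) ∧ ∀ i : Fin p, ∃ σ ∈ S, i ∈ σ

/-- A Boolean function is monotone. -/
def MonotoneB {p : ℕ} (f : (Fin p → Bool) → Bool) : Prop :=
  ∀ s t : Fin p → Bool, (∀ k, s k ≤ t k) → f s ≤ f t

/-- Coordinate `i` is essential for `f`. -/
def EssentialCoord {p : ℕ} (f : (Fin p → Bool) → Bool) (i : Fin p) : Prop :=
  ∃ s : Fin p → Bool, f (Function.update s i false) ≠ f (Function.update s i true)

/-- A Boolean function is nondegenerate: every coordinate is essential. -/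
def Nondegenerate {p : ℕ} (f : (Fin p → Bool) → Bool) : Prop :=
  ∀ i : Fin p, EssentialCoord f i

namespace AC
variable {p : ℕ}

def indB (σ : Finset (Fin p)) : Fin p → Bool := fun k => decide (k ∈ σ)

lemma fS_eq_true_iff (S : Finset (Finset (Fin p))) (s : Fin p → Bool) :
    fS S s = true ↔ ∃ σ ∈ S, ∀ k ∈ σ, s k = true := by
  simp [fS]

lemma fS_indB_iff (S : Finset (Finset (Fin p))) (τ : Finset (Fin p)) :
    fS S (indB τ) = true ↔ ∃ σ ∈ S, σ ⊆ τ := by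
  simp [fS, indB, Finset.subset_iff]

def suppB (s : Fin p → Bool) : Finset (Fin p) := Finset.univ.filter (fun k => s k = true)

lemma indB_suppB (s : Fin p → Bool) : indB (suppB s) = s := by
  funext k
  simp only [indB, suppB, Finset.mem_filter, Finset.mem_univ, true_and]
  cases h : s k <;> simp [h]

lemma exists_min_subset (T : Finset (Finset (Fin p))) {τ₀ : Finset (Fin p)} (h : τ₀ ∈ T) :
    ∃ σ ∈ T, σ ⊆ τ₀ ∧ ∀ τ ⊂ σ, τ ∉ T := by
  classical
  obtain ⟨σ, hσ, hmin⟩ := Finset.exists_minimal (s := T.filter (· ⊆ τ₀)) ⟨τ₀, by simp [h]⟩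
  simp only [Finset.mem_filter] at hσ
  refine ⟨σ, hσ.1, hσ.2, fun τ hτ hτT => ?_⟩
  exact hτ.2 (hmin (Finset.mem_filter.2 ⟨hτT, hτ.subset.trans hσ.2⟩) hτ.subset)

lemma eq_true_of_true_le {b : Bool} (h : true ≤ b) : b = true := by
  cases b
  · exact absurd h (by decide)
  · rfl

lemma monotone_fS (S : Finset (Finset (Fin p))) : MonotoneB (fS S) := by
  intro s t hst
  cases h : fS S s
  · exact Bool.false_le _
  · obtain ⟨σ, hσ, hall⟩ := (fS_eq_true_iff S s).1 h
    have : fS S t = true := (fS_eq_true_iff S t).2 ⟨σ, hσ, fun k hk => by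
      have h1 := hst k; rw [hall k hk] at h1; exact eq_true_of_true_le h1⟩
    rw [this]

lemma nondeg_fS {S : Finset (Finset (Fin p))} (hS : AntichainCover S) :
    Nondegenerate (fS S) := by
  intro i
  obtain ⟨σ, hσS, hiσ⟩ := hS.2 i
  refine ⟨indB σ, ?_⟩
  have htrue : fS S (Function.update (indB σ) i true) = true := by
    refine (fS_eq_true_iff S _).2 ⟨σ, hσS, fun k hk => ?_⟩
    rcases eq_or_ne k i with rfl | hne
    · simp
    · simp [Function.update_of_ne hne, indB, hk]
  have hfalse : fS S (Function.update (indB σ) i false) = false := by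
    rw [Bool.eq_false_iff]
    intro hcon
    obtain ⟨τ, hτS, hall⟩ := (fS_eq_true_iff S _).1 hcon
    have hiτ : i ∉ τ := fun hiτ => by simpa using hall i hiτ
    have hsub : τ ⊆ σ := fun k hk => by
      have := hall k hk
      rw [Function.update_of_ne (fun h => hiτ (by rw [← h]; exact hk))] at this
      simpa [indB] using this
    have : τ ≠ σ := fun h => hiτ (by rw [h]; exact hiσ)
    exact hS.1 hτS hσS this hsub
  rw [htrue, hfalse]; simp

end AC

open AC
theorem antichain_covers_biject_monotone_nondegenerate (p : ℕ) :
    Set.BijOn (fS (p := p)) {S | AntichainCover S}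
      {f : (Fin p → Bool) → Bool | MonotoneB f ∧ Nondegenerate f} := by
  classical
  refine ⟨fun S hS => ⟨monotone_fS S, nondeg_fS hS⟩, ?_, ?_⟩
  · -- injective
    intro S hS T hT hST
    have key : ∀ (A B : Finset (Finset (Fin p))), IsAntichain (· ⊆ ·) (A : Set (Finset (Fin p))) →
        fS A = fS B → ∀ σ ∈ A, (∃ τ ∈ B, τ ⊆ σ ∧ (∃ σ' ∈ A, σ' ⊆ τ)) := by
      intro A B _ hAB σ hσ
      have h1 : fS B (indB σ) = true := by
        rw [← hAB]; exact (fS_indB_iff A σ).2 ⟨σ, hσ, subset_rfl⟩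
      obtain ⟨τ, hτB, hτσ⟩ := (fS_indB_iff B σ).1 h1
      have h2 : fS A (indB τ) = true := by
        rw [hAB]; exact (fS_indB_iff B τ).2 ⟨τ, hτB, subset_rfl⟩
      obtain ⟨σ', hσ'A, hσ'τ⟩ := (fS_indB_iff A τ).1 h2
      exact ⟨τ, hτB, hτσ, σ', hσ'A, hσ'τ⟩
    have sub : ∀ (A B : Finset (Finset (Fin p))), IsAntichain (· ⊆ ·) (A : Set (Finset (Fin p))) →
        fS A = fS B → A ⊆ B := by
      intro A B hA hAB σ hσ
      obtain ⟨τ, hτB, hτσ, σ', hσ'A, hσ'τ⟩ := key A B hA hAB σ hσ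
      have : σ' = σ := by
        by_contra hne
        exact hA hσ'A hσ hne (hσ'τ.trans hτσ)
      have : σ = τ := subset_antisymm (this ▸ hσ'τ) hτσ
      exact this ▸ hτB
    exact subset_antisymm (sub S T hS.1 hST) (sub T S hT.1 hST.symm)
  · -- surjective
    intro f hf
    obtain ⟨hmono, hnd⟩ := hf
    set T : Finset (Finset (Fin p)) := Finset.univ.filter (fun σ => f (indB σ) = true) with hT
    have hmemT : ∀ σ, σ ∈ T ↔ f (indB σ) = true := by
      intro σ; simp [hT]
    set S : Finset (Finset (Fin p)) := T.filter (fun σ => ∀ τ ⊂ σ, τ ∉ T) with hSdef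
    have hmemS : ∀ σ, σ ∈ S ↔ σ ∈ T ∧ ∀ τ ⊂ σ, τ ∉ T := by
      intro σ; simp [hSdef]
    -- fS S = f
    have hfeq : fS S = f := by
      funext s
      have hind : indB (suppB s) = s := indB_suppB s
      cases hfs : f s
      · rw [Bool.eq_false_iff]
        intro hcon
        obtain ⟨σ, hσS, hall⟩ := (fS_eq_true_iff S s).1 hcon
        have hσT : σ ∈ T := ((hmemS σ).1 hσS).1
        have hle : ∀ k, indB σ k ≤ s k := by
          intro k
          simp only [indB]
          by_cases hk : k ∈ σ
          · simp [hk, hall k hk]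
          · simp [hk]
        have := hmono (indB σ) s hle
        rw [(hmemT σ).1 hσT, hfs] at this
        exact absurd this (by simp)
      · have hsT : suppB s ∈ T := (hmemT _).2 (by rw [hind, hfs])
        obtain ⟨σ, hσT, hsub, hmin⟩ := exists_min_subset T hsT
        refine (fS_eq_true_iff S s).2 ⟨σ, (hmemS σ).2 ⟨hσT, hmin⟩, fun k hk => ?_⟩
        have := hsub hk
        simpa [suppB] using this
    -- S is an antichain cover
    refine ⟨S, ⟨?_, ?_⟩, hfeq⟩
    · intro σ hσ τ hτ hne hsub
      simp only [Finset.coe_filter, Set.mem_setOf_eq, hSdef] at hσ hτ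
      exact hτ.2 σ (lt_of_le_of_ne hsub hne) hσ.1
    · intro i
      obtain ⟨s, hs⟩ := hnd i
      have hle : ∀ k, Function.update s i false k ≤ Function.update s i true k := by
        intro k
        rcases eq_or_ne k i with rfl | hne
        · simp
        · simp [Function.update_of_ne hne]
      have hmle := hmono _ _ hle
      have hfalse : f (Function.update s i false) = false := by
        cases h : f (Function.update s i false)
        · rfl
        · exfalso; apply hs
          rw [h] at hmle ⊢
          exact (AC.eq_true_of_true_le hmle).symm
      have htrue : f (Function.update s i true) = true := by
        cases h : f (Function.update s i true)
        · exact absurd (hfalse.trans h.symm) hs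
        · rfl
      set A := suppB (Function.update s i true) with hA
      have hAT : A ∈ T := (hmemT A).2 (by rw [hA, indB_suppB, htrue])
      obtain ⟨σ, hσT, hsub, hmin⟩ := exists_min_subset T hAT
      refine ⟨σ, (hmemS σ).2 ⟨hσT, hmin⟩, ?_⟩
      by_contra hiσ
      -- then indB σ ≤ update s i false, so f(update s i false) = true, contradiction
      have hle2 : ∀ k, indB σ k ≤ Function.update s i false k := by
        intro k
        simp only [indB]
        by_cases hk : k ∈ σ
        · have hki : k ≠ i := fun h => hiσ (h ▸ hk)
          have := hsub hk
          simp only [hA, suppB, Finset.mem_filter, Finset.mem_univ, true_and,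
            Function.update_of_ne hki] at this
          simp [hk, Function.update_of_ne hki, this]
        · simp [hk]
      have h2 := hmono _ _ hle2
      rw [(hmemT σ).1 hσT, hfalse] at h2
      exact absurd h2 (by simp)
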